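/- Let a_1,a_2,a_3, b_1,b_2,b_3 ∈ (0,1) with a_1+a_2+a_3 = b_1+b_2+b_3 = 1, and suppose the multisets {a_1,a_2,a_3} and {b_1,b_2,b_3} are distinct. Set θ_1(q) = log_3(a_1^q+a_2^q+a_3^q) and θ_2(q) = log_3(b_1^q+b_2^q+b_3^q). Then neither the function q ↦ max(θ_1(q), θ_2(q)) nor the function q ↦ min(θ_1(q), θ_2(q)) is real-analytic on ℝ; in fact the graphs of θ_1 and θ_2 cross transversally (with distinct derivatives) at q = 0 or at q = 1. -/

import Mathlib

open MeasureTheory Metric Filter Set ENNReal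

section TrinomialAux
open Real

private lemma hDeriv (v0 v1 v2 v3 t : ℝ) (ht : 0 < t) :
    HasDerivAt (fun t => v0 + v1*t + v2*Real.log t + v3*(t*Real.log t))
      (v1 + v2/t + v3*(Real.log t + 1)) t := by
  have hlog := Real.hasDerivAt_log (ne_of_gt ht)
  have h1 : HasDerivAt (fun t : ℝ => t * Real.log t) (Real.log t + 1) t := by
    have := (hasDerivAt_id t).mul hlog
    exact this.congr_deriv (by simp only [id_eq, one_mul, mul_inv_cancel₀ (ne_of_gt ht)])
  have := (((hasDerivAt_const t v0).add ((hasDerivAt_id t).const_mul v1)).add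
      (hlog.const_mul v2)).add (h1.const_mul v3)
  exact this.congr_deriv (by ring)

private lemma hDeriv2 (v1 v2 v3 t : ℝ) (ht : 0 < t) :
    HasDerivAt (fun t => v1 + v2/t + v3*(Real.log t + 1))
      ((v3*t - v2)/t^2) t := by
  have hlog := Real.hasDerivAt_log (ne_of_gt ht)
  have hinv : HasDerivAt (fun t : ℝ => v2 / t) (-v2/t^2) t := by
    have := (hasDerivAt_inv (ne_of_gt ht)).const_mul v2
    simpa [div_eq_mul_inv, neg_div, mul_div_assoc] using this
  have := ((hasDerivAt_const t v1).add hinv).add ((hlog.add_const 1).const_mul v3)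
  exact this.congr_deriv (by field_simp; ring)

private lemma hCont (v0 v1 v2 v3 u w : ℝ) (hu : 0 < u) :
    ContinuousOn (fun t => v0 + v1*t + v2*Real.log t + v3*(t*Real.log t)) (Icc u w) := by
  intro x hx
  exact ((hDeriv v0 v1 v2 v3 x (lt_of_lt_of_le hu hx.1)).continuousAt).continuousWithinAt

private lemma hCont' (v1 v2 v3 u w : ℝ) (hu : 0 < u) :
    ContinuousOn (fun t => v1 + v2/t + v3*(Real.log t + 1)) (Icc u w) := by
  intro x hx
  exact ((hDeriv2 v1 v2 v3 x (lt_of_lt_of_le hu hx.1)).continuousAt).continuousWithinAt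

/-- three distinct positive zeros of h' force v1 = v2 = v3 = 0 -/
private lemma no3crit (v1 v2 v3 w1 w2 w3 : ℝ) (h1 : 0 < w1) (h12 : w1 < w2) (h23 : w2 < w3)
    (hz1 : v1 + v2/w1 + v3*(Real.log w1 + 1) = 0)
    (hz2 : v1 + v2/w2 + v3*(Real.log w2 + 1) = 0)
    (hz3 : v1 + v2/w3 + v3*(Real.log w3 + 1) = 0) :
    v1 = 0 ∧ v2 = 0 ∧ v3 = 0 := by
  set g : ℝ → ℝ := fun t => v1 + v2/t + v3*(Real.log t + 1) with hg
  have h2 : 0 < w2 := h1.trans h12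
  have h3 : 0 < w3 := h2.trans h23
  obtain ⟨r1, hr1, hr1z⟩ := exists_hasDerivAt_eq_zero h12 (hCont' v1 v2 v3 w1 w2 h1)
    (hz1.trans hz2.symm)
    (fun x hx => hDeriv2 v1 v2 v3 x (h1.trans hx.1))
  obtain ⟨r2, hr2, hr2z⟩ := exists_hasDerivAt_eq_zero h23 (hCont' v1 v2 v3 w2 w3 h2)
    (hz2.trans hz3.symm)
    (fun x hx => hDeriv2 v1 v2 v3 x (h2.trans hx.1))
  have hr1p : 0 < r1 := h1.trans hr1.1
  have hr2p : 0 < r2 := h2.trans hr2.1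
  have e1 : v3 * r1 - v2 = 0 := by
    have := hr1z
    field_simp at this
    linarith [this]
  have e2 : v3 * r2 - v2 = 0 := by
    have := hr2z
    field_simp at this
    linarith [this]
  have hne : r1 ≠ r2 := ne_of_lt (hr1.2.trans hr2.1)
  have hv3 : v3 = 0 := by
    have : v3 * (r1 - r2) = 0 := by linarith
    rcases mul_eq_zero.mp this with h | h
    · exact h
    · exact absurd (by linarith : r1 = r2) hne
  have hv2 : v2 = 0 := by rw [hv3] at e1; linarith
  refine ⟨?_, hv2, hv3⟩
  rw [hv2, hv3] at hz1
  have hw1 : w1 ≠ 0 := ne_of_gt h1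
  field_simp at hz1
  exact (mul_eq_zero.mp (by linarith : v1 * w1 = 0)).resolve_right hw1


/-- four distinct positive zeros of h force all coefficients zero -/
private lemma no4zero (v0 v1 v2 v3 z1 z2 z3 z4 : ℝ) (h1 : 0 < z1) (h12 : z1 < z2)
    (h23 : z2 < z3) (h34 : z3 < z4)
    (hza : v0 + v1*z1 + v2*Real.log z1 + v3*(z1*Real.log z1) = 0)
    (hzb : v0 + v1*z2 + v2*Real.log z2 + v3*(z2*Real.log z2) = 0)
    (hzc : v0 + v1*z3 + v2*Real.log z3 + v3*(z3*Real.log z3) = 0)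
    (hzd : v0 + v1*z4 + v2*Real.log z4 + v3*(z4*Real.log z4) = 0) :
    v0 = 0 ∧ v1 = 0 ∧ v2 = 0 ∧ v3 = 0 := by
  have h2 : 0 < z2 := h1.trans h12
  have h3 : 0 < z3 := h2.trans h23
  obtain ⟨r1, hr1, hr1z⟩ := exists_hasDerivAt_eq_zero h12 (hCont v0 v1 v2 v3 z1 z2 h1)
    (hza.trans hzb.symm)
    (fun x hx => hDeriv v0 v1 v2 v3 x (h1.trans hx.1))
  obtain ⟨r2, hr2, hr2z⟩ := exists_hasDerivAt_eq_zero h23 (hCont v0 v1 v2 v3 z2 z3 h2)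
    (hzb.trans hzc.symm)
    (fun x hx => hDeriv v0 v1 v2 v3 x (h2.trans hx.1))
  obtain ⟨r3, hr3, hr3z⟩ := exists_hasDerivAt_eq_zero h34 (hCont v0 v1 v2 v3 z3 z4 h3)
    (hzc.trans hzd.symm)
    (fun x hx => hDeriv v0 v1 v2 v3 x (h3.trans hx.1))
  obtain ⟨hv1, hv2, hv3⟩ := no3crit v1 v2 v3 r1 r2 r3 (h1.trans hr1.1)
    (hr1.2.trans hr2.1) (hr2.2.trans hr3.1) hr1z hr2z hr3z
  refine ⟨?_, hv1, hv2, hv3⟩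
  rw [hv1, hv2, hv3] at hza
  linarith

/-- three positive zeros plus a critical point among them force all coefficients zero -/
private lemma threeZeroCrit (v0 v1 v2 v3 c1 c2 c3 d : ℝ) (h1 : 0 < c1) (h12 : c1 < c2)
    (h23 : c2 < c3)
    (hz1 : v0 + v1*c1 + v2*Real.log c1 + v3*(c1*Real.log c1) = 0)
    (hz2 : v0 + v1*c2 + v2*Real.log c2 + v3*(c2*Real.log c2) = 0)
    (hz3 : v0 + v1*c3 + v2*Real.log c3 + v3*(c3*Real.log c3) = 0)
    (hd : d = c1 ∨ d = c2 ∨ d = c3)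
    (hcrit : v1 + v2/d + v3*(Real.log d + 1) = 0) :
    v0 = 0 ∧ v1 = 0 ∧ v2 = 0 ∧ v3 = 0 := by
  have h2 : 0 < c2 := h1.trans h12
  have h3 : 0 < c3 := h2.trans h23
  obtain ⟨r1, hr1, hr1z⟩ := exists_hasDerivAt_eq_zero h12 (hCont v0 v1 v2 v3 c1 c2 h1)
    (hz1.trans hz2.symm) (fun x hx => hDeriv v0 v1 v2 v3 x (h1.trans hx.1))
  obtain ⟨r2, hr2, hr2z⟩ := exists_hasDerivAt_eq_zero h23 (hCont v0 v1 v2 v3 c2 c3 h2)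
    (hz2.trans hz3.symm) (fun x hx => hDeriv v0 v1 v2 v3 x (h2.trans hx.1))
  have key : v1 = 0 ∧ v2 = 0 ∧ v3 = 0 := by
    rcases hd with rfl | rfl | rfl
    · exact no3crit v1 v2 v3 d r1 r2 h1 hr1.1 (hr1.2.trans hr2.1) hcrit hr1z hr2z
    · exact no3crit v1 v2 v3 r1 d r2 (h1.trans hr1.1) hr1.2 hr2.1 hr1z hcrit hr2z
    · exact no3crit v1 v2 v3 r1 r2 d (h1.trans hr1.1) (hr1.2.trans hr2.1) hr2.2 hr1z hr2z hcrit
  obtain ⟨hv1, hv2, hv3⟩ := key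
  refine ⟨?_, hv1, hv2, hv3⟩
  rw [hv1, hv2, hv3] at hz1
  linarith

private lemma pos_no_sign_change (g : ℝ → ℝ) (g' u c w : ℝ) (huc : u < c) (hcw : c < w)
    (hcont : ContinuousOn g (Icc u w))
    (hdiff : HasDerivAt g g' c) (hg' : g' ≠ 0)
    (hzero : ∀ z ∈ Icc u w, g z = 0 → z = c) (hgc : g c = 0)
    (hu : 0 < g u) (hw : 0 < g w) : False := by
  have hcmem : c ∈ Icc u w := ⟨huc.le, hcw.le⟩
  obtain ⟨m, hm, hmin⟩ := (isCompact_Icc (a := u) (b := w)).exists_isMinOn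
    ⟨c, hcmem⟩ hcont
  have hmle : g m ≤ 0 := hgc ▸ hmin hcmem
  rcases lt_or_eq_of_le hmle with hneg | hzero'
  · -- g m < 0 : two zeros, one on each side of m, both must be c
    have hmu : u < m := by
      rcases lt_or_eq_of_le hm.1 with h | h
      · exact h
      · exact absurd (h ▸ hneg) (asymm hu)
    have hmw : m < w := by
      rcases lt_or_eq_of_le hm.2 with h | h
      · exact h
      · rw [h] at hneg; exact absurd hneg (asymm hw)
    obtain ⟨z1, hz1m, hz1⟩ : ∃ z ∈ Icc u m, g z = 0 := by
      have := intermediate_value_Icc' hmu.le (hcont.mono (Icc_subset_Icc le_rfl hmw.le))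
      have h0 : (0:ℝ) ∈ Icc (g m) (g u) := ⟨hneg.le, hu.le⟩
      obtain ⟨z, hz, hz0⟩ := this h0
      exact ⟨z, hz, hz0⟩
    obtain ⟨z2, hz2m, hz2⟩ : ∃ z ∈ Icc m w, g z = 0 := by
      have := intermediate_value_Icc hmw.le (hcont.mono (Icc_subset_Icc hmu.le le_rfl))
      have h0 : (0:ℝ) ∈ Icc (g m) (g w) := ⟨hneg.le, hw.le⟩
      obtain ⟨z, hz, hz0⟩ := this h0
      exact ⟨z, hz, hz0⟩
    have hz1c : z1 = c := hzero z1 ⟨hz1m.1, hz1m.2.trans hmw.le⟩ hz1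
    have hz2c : z2 = c := hzero z2 ⟨hmu.le.trans hz2m.1, hz2m.2⟩ hz2
    have : z1 < z2 := by
      have h1 : z1 < m := lt_of_le_of_ne hz1m.2 (fun h => by rw [h] at hz1; linarith)
      have h2 : m < z2 := lt_of_le_of_ne hz2m.1 (fun h => by rw [← h] at hz2; linarith)
      linarith
    rw [hz1c, hz2c] at this
    exact lt_irrefl c this
  · -- min value 0, attained at m = c, interior => derivative zero
    have hmc : m = c := hzero m hm hzero'
    rw [hmc] at hmin
    have : IsLocalMin g c := hmin.isLocalMin (Icc_mem_nhds huc hcw)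
    exact hg' (this.hasDerivAt_eq_zero hdiff)

private lemma signConst (v0 v1 v2 v3 u w : ℝ) (hu : 0 < u) (huw : u ≤ w)
    (hnz : ∀ z ∈ Icc u w, v0 + v1*z + v2*Real.log z + v3*(z*Real.log z) ≠ 0) :
    0 < (v0 + v1*u + v2*Real.log u + v3*(u*Real.log u)) *
        (v0 + v1*w + v2*Real.log w + v3*(w*Real.log w)) := by
  set h : ℝ → ℝ := fun t => v0 + v1*t + v2*Real.log t + v3*(t*Real.log t) with hh
  have hun : h u ≠ 0 := hnz u ⟨le_rfl, huw⟩
  have hwn : h w ≠ 0 := hnz w ⟨huw, le_rfl⟩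
  rcases lt_or_gt_of_ne hun with hu1 | hu1 <;> rcases lt_or_gt_of_ne hwn with hw1 | hw1
  · exact mul_pos_of_neg_of_neg hu1 hw1
  · exfalso
    obtain ⟨z, hz, hz0⟩ := intermediate_value_Icc huw (hCont v0 v1 v2 v3 u w hu)
      (⟨hu1.le, hw1.le⟩ : (0:ℝ) ∈ Icc (h u) (h w))
    exact hnz z hz hz0
  · exfalso
    obtain ⟨z, hz, hz0⟩ := intermediate_value_Icc' huw (hCont v0 v1 v2 v3 u w hu)
      (⟨hw1.le, hu1.le⟩ : (0:ℝ) ∈ Icc (h w) (h u))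
    exact hnz z hz hz0
  · exact mul_pos hu1 hw1

private lemma signChange (v0 v1 v2 v3 u c w : ℝ) (hu : 0 < u) (huc : u < c) (hcw : c < w)
    (honly : ∀ z ∈ Icc u w, v0 + v1*z + v2*Real.log z + v3*(z*Real.log z) = 0 → z = c)
    (hc0 : v0 + v1*c + v2*Real.log c + v3*(c*Real.log c) = 0)
    (hcrit : v1 + v2/c + v3*(Real.log c + 1) ≠ 0) :
    (v0 + v1*u + v2*Real.log u + v3*(u*Real.log u)) *
        (v0 + v1*w + v2*Real.log w + v3*(w*Real.log w)) < 0 := by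
  set h : ℝ → ℝ := fun t => v0 + v1*t + v2*Real.log t + v3*(t*Real.log t) with hh
  have hun : h u ≠ 0 := fun h0 => absurd (honly u ⟨le_rfl, (huc.trans hcw).le⟩ h0) (ne_of_lt huc)
  have hwn : h w ≠ 0 := fun h0 => absurd (honly w ⟨(huc.trans hcw).le, le_rfl⟩ h0)
    (ne_of_gt hcw)
  have hc : 0 < c := hu.trans huc
  rcases lt_or_gt_of_ne hun with hu1 | hu1 <;> rcases lt_or_gt_of_ne hwn with hw1 | hw1
  · exfalso
    refine pos_no_sign_change (fun t => -(h t)) (-(v1 + v2/c + v3*(Real.log c + 1))) u c w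
      huc hcw ((hCont v0 v1 v2 v3 u w hu).neg) ((hDeriv v0 v1 v2 v3 c hc).neg)
      (neg_ne_zero.mpr hcrit) (fun z hz h0 => honly z hz (neg_eq_zero.mp h0))
      (neg_eq_zero.mpr hc0) (by simpa using hu1) (by simpa using hw1)
  · exact mul_neg_of_neg_of_pos hu1 hw1
  · exact mul_neg_of_pos_of_neg hu1 hw1
  · exfalso
    exact pos_no_sign_change h (v1 + v2/c + v3*(Real.log c + 1)) u c w huc hcw
      (hCont v0 v1 v2 v3 u w hu) (hDeriv v0 v1 v2 v3 c hc) hcrit honly hc0 hu1 hw1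

private lemma cubicNeg (t x1 x2 x3 : ℝ) (h12 : x1 ≤ x2) (h23 : x2 ≤ x3)
    (h : (t - x1)*(t - x2)*(t - x3) < 0) : t < x1 ∨ (x2 < t ∧ t < x3) := by
  by_contra hcon
  push_neg at hcon
  obtain ⟨h1, h2⟩ := hcon
  rcases le_or_gt t x2 with h3 | h3
  · nlinarith [mul_nonneg (mul_nonneg (by linarith : (0:ℝ) ≤ t - x1)
      (by linarith : (0:ℝ) ≤ x2 - t)) (by linarith : (0:ℝ) ≤ x3 - t)]
  · have h4 := h2 h3
    nlinarith [mul_nonneg (mul_nonneg (by linarith : (0:ℝ) ≤ t - x1)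
      (by linarith : (0:ℝ) ≤ t - x2)) (by linarith : (0:ℝ) ≤ t - x3)]

private lemma cubicPos (t y1 y2 y3 : ℝ) (h12 : y1 ≤ y2) (h23 : y2 ≤ y3)
    (h : 0 < (t - y1)*(t - y2)*(t - y3)) : (y1 < t ∧ t < y2) ∨ y3 < t := by
  by_contra hcon
  push_neg at hcon
  obtain ⟨h1, h2⟩ := hcon
  rcases le_or_gt t y1 with h3 | h3
  · nlinarith [mul_nonneg (mul_nonneg (by linarith : (0:ℝ) ≤ y1 - t)
      (by linarith : (0:ℝ) ≤ y2 - t)) (by linarith : (0:ℝ) ≤ y3 - t)]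
  · have h4 := h1 h3
    nlinarith [mul_nonneg (mul_nonneg (by linarith : (0:ℝ) ≤ t - y1)
      (by linarith : (0:ℝ) ≤ t - y2)) (by linarith : (0:ℝ) ≤ y3 - t)]


private lemma neqCase (x1 x2 x3 y1 y2 y3 : ℝ)
    (hx1 : 0 < x1) (hx12 : x1 ≤ x2) (hx23 : x2 ≤ x3)
    (hy1 : 0 < y1) (hy12 : y1 ≤ y2) (hy23 : y2 ≤ y3)
    (hsx : x1 + x2 + x3 = 1) (hsy : y1 + y2 + y3 = 1)
    (hprod : x1*x2*x3 = y1*y2*y3)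
    (hs : x1*x2 + x1*x3 + x2*x3 < y1*y2 + y1*y3 + y2*y3) :
    y1 < x1 ∧ x2 < y2 ∧ y3 < x3 := by
  have hx2 : 0 < x2 := lt_of_lt_of_le hx1 hx12
  have hx3 : 0 < x3 := lt_of_lt_of_le hx2 hx23
  have hy2 : 0 < y2 := lt_of_lt_of_le hy1 hy12
  have hy3 : 0 < y3 := lt_of_lt_of_le hy2 hy23
  have hpy : ∀ t : ℝ, 0 < t → (t - y1)*(t - y2)*(t - y3) = 0 →
      (t - x1)*(t - x2)*(t - x3) < 0 := by
    intro t ht h0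
    have key : (t - x1)*(t - x2)*(t - x3) =
        ((x1*x2 + x1*x3 + x2*x3) - (y1*y2 + y1*y3 + y2*y3))*t
          + (t - y1)*(t - y2)*(t - y3) := by
      linear_combination (-(t^2))*hsx + t^2*hsy - hprod
    rw [key, h0, add_zero]
    exact mul_neg_of_neg_of_pos (by linarith) ht
  have hqx : ∀ t : ℝ, 0 < t → (t - x1)*(t - x2)*(t - x3) = 0 →
      0 < (t - y1)*(t - y2)*(t - y3) := by
    intro t ht h0
    have key : (t - y1)*(t - y2)*(t - y3) =
        ((y1*y2 + y1*y3 + y2*y3) - (x1*x2 + x1*x3 + x2*x3))*t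
          + (t - x1)*(t - x2)*(t - x3) := by
      linear_combination (-(t^2))*hsy + t^2*hsx + hprod
    rw [key, h0, add_zero]
    exact mul_pos (by linarith) ht
  have hpy1 := hpy y1 hy1 (by ring)
  have hpy2 := hpy y2 hy2 (by ring)
  have hpy3 := hpy y3 hy3 (by ring)
  have hqx1 := hqx x1 hx1 (by ring)
  have hqx2 := hqx x2 hx2 (by ring)
  have hqx3 := hqx x3 hx3 (by ring)
  have hy1x1 : y1 < x1 := by
    rcases cubicPos x1 y1 y2 y3 hy12 hy23 hqx1 with ⟨h, _⟩ | h
    · exact h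
    · linarith
  have hx2y2 : x2 < y2 := by
    by_contra hcon
    push_neg at hcon
    have hy3x2 : y3 < x2 := by
      rcases cubicPos x2 y1 y2 y3 hy12 hy23 hqx2 with ⟨_, h⟩ | h
      · linarith
      · exact h
    have hy3x1 : y3 < x1 := by
      rcases cubicNeg y3 x1 x2 x3 hx12 hx23 hpy3 with h | ⟨h, _⟩
      · exact h
      · linarith
    linarith
  have hy3x3 : y3 < x3 := by
    rcases cubicNeg y3 x1 x2 x3 hx12 hx23 hpy3 with h | ⟨_, h⟩
    · linarith
    · exact h
  exact ⟨hy1x1, hx2y2, hy3x3⟩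

private lemma sgnA {a b : ℝ} (h : a * b < 0) (hb : b < 0) : 0 < a := by
  rcases mul_neg_iff.mp h with ⟨h1, h2⟩ | ⟨h1, h2⟩
  · exact h1
  · linarith
private lemma sgnB {a b : ℝ} (h : a * b < 0) (ha : a < 0) : 0 < b := by
  rcases mul_neg_iff.mp h with ⟨h1, h2⟩ | ⟨h1, h2⟩
  · linarith
  · exact h2
private lemma sgnC {a b : ℝ} (h : a * b < 0) (ha : 0 < a) : b < 0 := by
  rcases mul_neg_iff.mp h with ⟨h1, h2⟩ | ⟨h1, h2⟩
  · exact h2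
  · linarith
private lemma sgnD {a b : ℝ} (h : a * b < 0) (hb : 0 < b) : a < 0 := by
  rcases mul_neg_iff.mp h with ⟨h1, h2⟩ | ⟨h1, h2⟩
  · linarith
  · exact h1
private lemma sgnE {a b : ℝ} (h : 0 < a * b) (ha : 0 < a) : 0 < b := by
  rcases mul_pos_iff.mp h with ⟨h1, h2⟩ | ⟨h1, h2⟩
  · exact h2
  · linarith
private lemma sgnF {a b : ℝ} (h : 0 < a * b) (ha : a < 0) : b < 0 := by
  rcases mul_pos_iff.mp h with ⟨h1, h2⟩ | ⟨h1, h2⟩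
  · linarith
  · exact h2

private lemma mainNeq (x1 x2 x3 y1 y2 y3 : ℝ)
    (hx1 : 0 < x1) (hx12 : x1 ≤ x2) (hx23 : x2 ≤ x3)
    (hy1 : 0 < y1) (hy12 : y1 ≤ y2) (hy23 : y2 ≤ y3)
    (hsx : x1 + x2 + x3 = 1) (hsy : y1 + y2 + y3 = 1)
    (hlog : Real.log x1 + Real.log x2 + Real.log x3
      = Real.log y1 + Real.log y2 + Real.log y3)
    (hflog : x1*Real.log x1 + x2*Real.log x2 + x3*Real.log x3
      = y1*Real.log y1 + y2*Real.log y2 + y3*Real.log y3)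
    (hy1x1 : y1 < x1) (hx2y2 : x2 < y2) (hy3x3 : y3 < x3) : False := by
  have hx2 : 0 < x2 := lt_of_lt_of_le hx1 hx12
  have hx3 : 0 < x3 := lt_of_lt_of_le hx2 hx23
  have hy2 : 0 < y2 := lt_of_lt_of_le hy1 hy12
  have hy3 : 0 < y3 := lt_of_lt_of_le hy2 hy23
  set c1 := (y1 + x1)/2 with hc1
  set c2 := (x2 + y2)/2 with hc2
  set c3 := (y3 + x3)/2 with hc3
  have hc1p : 0 < c1 := by rw [hc1]; linarith
  have hy1c1 : y1 < c1 := by rw [hc1]; linarith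
  have hc1x1 : c1 < x1 := by rw [hc1]; linarith
  have hx2c2 : x2 < c2 := by rw [hc2]; linarith
  have hc2y2 : c2 < y2 := by rw [hc2]; linarith
  have hy3c3 : y3 < c3 := by rw [hc3]; linarith
  have hc3x3 : c3 < x3 := by rw [hc3]; linarith
  have hc12 : c1 < c2 := by linarith
  have hc23 : c2 < c3 := by linarith
  -- find nonzero coefficient vector
  set M : Matrix (Fin 4) (Fin 4) ℝ := Matrix.of
    (fun i => ![1, (![c1,c2,c3,c3] : Fin 4 → ℝ) i,
      Real.log ((![c1,c2,c3,c3] : Fin 4 → ℝ) i),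
      (![c1,c2,c3,c3] : Fin 4 → ℝ) i * Real.log ((![c1,c2,c3,c3] : Fin 4 → ℝ) i)]) with hM
  have hdet : M.det = 0 := by
    apply Matrix.det_zero_of_row_eq (i := 2) (j := 3) (by decide)
    rfl
  obtain ⟨v, hvne, hvz⟩ := Matrix.exists_mulVec_eq_zero_iff.mpr hdet
  have hz1 : v 0 + v 1 * c1 + v 2 * Real.log c1 + v 3 * (c1 * Real.log c1) = 0 := by
    have := congrFun hvz 0
    simp [hM, Matrix.mulVec, dotProduct, Fin.sum_univ_four] at this
    linear_combination this
  have hz2 : v 0 + v 1 * c2 + v 2 * Real.log c2 + v 3 * (c2 * Real.log c2) = 0 := by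
    have := congrFun hvz 1
    simp [hM, Matrix.mulVec, dotProduct, Fin.sum_univ_four] at this
    linear_combination this
  have hz3 : v 0 + v 1 * c3 + v 2 * Real.log c3 + v 3 * (c3 * Real.log c3) = 0 := by
    have := congrFun hvz 2
    simp [hM, Matrix.mulVec, dotProduct, Fin.sum_univ_four] at this
    linear_combination this
  have hall : ¬ (v 0 = 0 ∧ v 1 = 0 ∧ v 2 = 0 ∧ v 3 = 0) := by
    rintro ⟨h0, h1, h2, h3⟩
    apply hvne
    funext i
    fin_cases i <;> assumption
  -- every positive zero of h is one of c1, c2, c3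
  have honly : ∀ z : ℝ, 0 < z →
      v 0 + v 1 * z + v 2 * Real.log z + v 3 * (z * Real.log z) = 0 →
      z = c1 ∨ z = c2 ∨ z = c3 := by
    intro z hzp hz0
    by_contra hno
    push_neg at hno
    obtain ⟨hn1, hn2, hn3⟩ := hno
    rcases lt_trichotomy z c1 with h | h | h
    · exact hall (no4zero (v 0) (v 1) (v 2) (v 3) z c1 c2 c3 hzp h hc12 hc23 hz0 hz1 hz2 hz3)
    · exact hn1 h
    · rcases lt_trichotomy z c2 with h' | h' | h'
      · exact hall (no4zero (v 0) (v 1) (v 2) (v 3) c1 z c2 c3 hc1p h h' hc23 hz1 hz0 hz2 hz3)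
      · exact hn2 h'
      · rcases lt_trichotomy z c3 with h'' | h'' | h''
        · exact hall (no4zero (v 0) (v 1) (v 2) (v 3) c1 c2 z c3 hc1p hc12 h' h'' hz1 hz2 hz0 hz3)
        · exact hn3 h''
        · exact hall (no4zero (v 0) (v 1) (v 2) (v 3) c1 c2 c3 z hc1p hc12 hc23 h'' hz1 hz2 hz3 hz0)
  have hcrit : ∀ d : ℝ, (d = c1 ∨ d = c2 ∨ d = c3) →
      v 1 + v 2 / d + v 3 * (Real.log d + 1) ≠ 0 := by
    intro d hd h0
    exact hall (threeZeroCrit (v 0) (v 1) (v 2) (v 3) c1 c2 c3 d hc1p hc12 hc23 hz1 hz2 hz3 hd h0)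
  -- the five sign relations
  have P1 := signChange (v 0) (v 1) (v 2) (v 3) y1 c1 x1 hy1 hy1c1 hc1x1
    (fun z hz h0 => by
      rcases honly z (lt_of_lt_of_le hy1 hz.1) h0 with h | h | h
      · exact h
      · exfalso; rw [h] at hz; linarith [hz.2]
      · exfalso; rw [h] at hz; linarith [hz.2])
    hz1 (hcrit c1 (Or.inl rfl))
  have P2 := signConst (v 0) (v 1) (v 2) (v 3) x1 x2 hx1 hx12
    (fun z hz h0 => by
      rcases honly z (lt_of_lt_of_le hx1 hz.1) h0 with h | h | h
      · rw [h] at hz; linarith [hz.1]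
      · rw [h] at hz; linarith [hz.2]
      · rw [h] at hz; linarith [hz.2])
  have P3 := signChange (v 0) (v 1) (v 2) (v 3) x2 c2 y2 hx2 hx2c2 hc2y2
    (fun z hz h0 => by
      rcases honly z (lt_of_lt_of_le hx2 hz.1) h0 with h | h | h
      · exfalso; rw [h] at hz; linarith [hz.1]
      · exact h
      · exfalso; rw [h] at hz; linarith [hz.2])
    hz2 (hcrit c2 (Or.inr (Or.inl rfl)))
  have P4 := signConst (v 0) (v 1) (v 2) (v 3) y2 y3 hy2 hy23
    (fun z hz h0 => by
      rcases honly z (lt_of_lt_of_le hy2 hz.1) h0 with h | h | h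
      · rw [h] at hz; linarith [hz.1]
      · rw [h] at hz; linarith [hz.1]
      · rw [h] at hz; linarith [hz.2])
  have P5 := signChange (v 0) (v 1) (v 2) (v 3) y3 c3 x3 hy3 hy3c3 hc3x3
    (fun z hz h0 => by
      rcases honly z (lt_of_lt_of_le hy3 hz.1) h0 with h | h | h
      · exfalso; rw [h] at hz; linarith [hz.1]
      · exfalso; rw [h] at hz; linarith [hz.1]
      · exact h)
    hz3 (hcrit c3 (Or.inr (Or.inr rfl)))
  -- the linear combination identity
  have combo : (v 0 + v 1 * x1 + v 2 * Real.log x1 + v 3 * (x1 * Real.log x1))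
      + (v 0 + v 1 * x2 + v 2 * Real.log x2 + v 3 * (x2 * Real.log x2))
      + (v 0 + v 1 * x3 + v 2 * Real.log x3 + v 3 * (x3 * Real.log x3))
      = (v 0 + v 1 * y1 + v 2 * Real.log y1 + v 3 * (y1 * Real.log y1))
      + (v 0 + v 1 * y2 + v 2 * Real.log y2 + v 3 * (y2 * Real.log y2))
      + (v 0 + v 1 * y3 + v 2 * Real.log y3 + v 3 * (y3 * Real.log y3)) := by
    linear_combination (v 1) * hsx - (v 1) * hsy + (v 2) * hlog + (v 3) * hflog
  clear hvz hdet honly hcrit hz1 hz2 hz3 hall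
  clear hM M
  set A1 := v 0 + v 1 * x1 + v 2 * Real.log x1 + v 3 * (x1 * Real.log x1) with hA1
  set A2 := v 0 + v 1 * x2 + v 2 * Real.log x2 + v 3 * (x2 * Real.log x2) with hA2
  set A3 := v 0 + v 1 * x3 + v 2 * Real.log x3 + v 3 * (x3 * Real.log x3) with hA3
  set B1 := v 0 + v 1 * y1 + v 2 * Real.log y1 + v 3 * (y1 * Real.log y1) with hB1
  set B2 := v 0 + v 1 * y2 + v 2 * Real.log y2 + v 3 * (y2 * Real.log y2) with hB2
  set B3 := v 0 + v 1 * y3 + v 2 * Real.log y3 + v 3 * (y3 * Real.log y3) with hB3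
  -- P1 : B1 * A1 < 0, P2 : 0 < A1 * A2, P3 : A2 * B2 < 0, P4 : 0 < B2 * B3, P5 : B3 * A3 < 0
  have hA1ne : A1 ≠ 0 := by intro h; rw [h] at P2; simp at P2
  rcases lt_or_gt_of_ne hA1ne with hA1s | hA1s
  · have hB1s : 0 < B1 := sgnA P1 hA1s
    have hA2s : A2 < 0 := sgnF P2 hA1s
    have hB2s : 0 < B2 := sgnB P3 hA2s
    have hB3s : 0 < B3 := sgnE P4 hB2s
    have hA3s : A3 < 0 := sgnC P5 hB3s
    linarith
  · have hB1s : B1 < 0 := sgnD P1 hA1s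
    have hA2s : 0 < A2 := sgnE P2 hA1s
    have hB2s : B2 < 0 := sgnC P3 hA2s
    have hB3s : B3 < 0 := sgnF P4 hB2s
    have hA3s : 0 < A3 := sgnB P5 hB3s
    linarith

private lemma tripleUnique (x1 x2 x3 y1 y2 y3 : ℝ)
    (hx1 : 0 < x1) (hx12 : x1 ≤ x2) (hx23 : x2 ≤ x3)
    (hy1 : 0 < y1) (hy12 : y1 ≤ y2) (hy23 : y2 ≤ y3)
    (hsx : x1 + x2 + x3 = 1) (hsy : y1 + y2 + y3 = 1)
    (hlog : Real.log x1 + Real.log x2 + Real.log x3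
      = Real.log y1 + Real.log y2 + Real.log y3)
    (hflog : x1*Real.log x1 + x2*Real.log x2 + x3*Real.log x3
      = y1*Real.log y1 + y2*Real.log y2 + y3*Real.log y3) :
    x1 = y1 ∧ x2 = y2 ∧ x3 = y3 := by
  have hx2 : 0 < x2 := lt_of_lt_of_le hx1 hx12
  have hx3 : 0 < x3 := lt_of_lt_of_le hx2 hx23
  have hy2 : 0 < y2 := lt_of_lt_of_le hy1 hy12
  have hy3 : 0 < y3 := lt_of_lt_of_le hy2 hy23
  have hprod : x1*x2*x3 = y1*y2*y3 := by
    have ex1 := Real.exp_log hx1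
    have ex2 := Real.exp_log hx2
    have ex3 := Real.exp_log hx3
    have ey1 := Real.exp_log hy1
    have ey2 := Real.exp_log hy2
    have ey3 := Real.exp_log hy3
    calc x1*x2*x3 = Real.exp (Real.log x1 + Real.log x2 + Real.log x3) := by
          rw [Real.exp_add, Real.exp_add, ex1, ex2, ex3]
      _ = Real.exp (Real.log y1 + Real.log y2 + Real.log y3) := by rw [hlog]
      _ = y1*y2*y3 := by rw [Real.exp_add, Real.exp_add, ey1, ey2, ey3]
  rcases lt_trichotomy (x1*x2 + x1*x3 + x2*x3) (y1*y2 + y1*y3 + y2*y3) with hs | hs | hs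
  · exfalso
    obtain ⟨i1, i2, i3⟩ := neqCase x1 x2 x3 y1 y2 y3 hx1 hx12 hx23 hy1 hy12 hy23
      hsx hsy hprod hs
    exact mainNeq x1 x2 x3 y1 y2 y3 hx1 hx12 hx23 hy1 hy12 hy23 hsx hsy hlog hflog i1 i2 i3
  · -- all elementary symmetric functions agree: Vieta
    have hpy1 : (y1 - x1)*(y1 - x2)*(y1 - x3) = 0 := by
      linear_combination (-(y1^2))*hsx + y1^2*hsy + y1*hs - hprod
    have hqx1 : (x1 - y1)*(x1 - y2)*(x1 - y3) = 0 := by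
      linear_combination (-(x1^2))*hsy + x1^2*hsx - x1*hs + hprod
    have h1 : x1 = y1 := by
      have hy1ge : x1 ≤ y1 := by
        rcases mul_eq_zero.mp hpy1 with h | h
        · rcases mul_eq_zero.mp h with h' | h'
          · linarith [sub_eq_zero.mp h']
          · linarith [sub_eq_zero.mp h']
        · linarith [sub_eq_zero.mp h]
      have hx1ge : y1 ≤ x1 := by
        rcases mul_eq_zero.mp hqx1 with h | h
        · rcases mul_eq_zero.mp h with h' | h'
          · linarith [sub_eq_zero.mp h']
          · linarith [sub_eq_zero.mp h']
        · linarith [sub_eq_zero.mp h]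
      linarith
    have hsum2 : x2 + x3 = y2 + y3 := by linarith
    have hprod2 : x2*x3 = y2*y3 := by
      have h0 : x1 * (x2*x3) = x1 * (y2*y3) := by
        rw [h1] at hprod ⊢
        linarith [hprod]
      exact mul_left_cancel₀ (ne_of_gt hx1) h0
    have hpy2 : (y2 - x2)*(y2 - x3) = 0 := by
      linear_combination (-y2)*hsum2 + hprod2
    have hqx2 : (x2 - y2)*(x2 - y3) = 0 := by
      linear_combination (-x2)*hsum2.symm + hprod2.symm
    have h2 : x2 = y2 := by
      have hle : x2 ≤ y2 := by
        rcases mul_eq_zero.mp hpy2 with h | h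
        · linarith [sub_eq_zero.mp h]
        · linarith [sub_eq_zero.mp h]
      have hge : y2 ≤ x2 := by
        rcases mul_eq_zero.mp hqx2 with h | h
        · linarith [sub_eq_zero.mp h]
        · linarith [sub_eq_zero.mp h]
      linarith
    exact ⟨h1, h2, by linarith⟩
  · exfalso
    obtain ⟨i1, i2, i3⟩ := neqCase y1 y2 y3 x1 x2 x3 hy1 hy12 hy23 hx1 hx12 hx23
      hsy hsx hprod.symm hs
    exact mainNeq y1 y2 y3 x1 x2 x3 hy1 hy12 hy23 hx1 hx12 hx23 hsy hsx hlog.symm hflog.symm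
      i1 i2 i3

private lemma thetaHasDeriv (a : Fin 3 → ℝ) (hpos : ∀ i, 0 < a i) (q : ℝ) :
    HasDerivAt (fun q : ℝ => Real.logb 3 (∑ i, a i ^ q))
      ((∑ i, a i ^ q * Real.log (a i)) / (∑ i, a i ^ q) / Real.log 3) q := by
  have hS : HasDerivAt (fun q : ℝ => ∑ i, a i ^ q) (∑ i, a i ^ q * Real.log (a i)) q :=
    HasDerivAt.fun_sum (fun i _ =>
      (Real.hasStrictDerivAt_const_rpow (hpos i) q).hasDerivAt)
  have hSpos : 0 < ∑ i, a i ^ q :=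
    Finset.sum_pos (fun i _ => Real.rpow_pos_of_pos (hpos i) q) Finset.univ_nonempty
  have := (hS.log (ne_of_gt hSpos)).div_const (Real.log 3)
  simpa [Real.logb] using this

private lemma maxNotDiffAt {f g : ℝ → ℝ} {p d1 d2 : ℝ} (hf : HasDerivAt f d1 p)
    (hg : HasDerivAt g d2 p) (hfg : f p = g p) (hd : d1 ≠ d2) :
    ¬ DifferentiableAt ℝ (fun x => max (f x) (g x)) p := by
  intro hD
  have hvalf : max (f p) (g p) = f p := by rw [hfg, max_self]
  have hvalg : max (f p) (g p) = g p := by rw [hfg, max_self]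
  have hmf : IsLocalMin (fun x => max (f x) (g x) - f x) p := by
    apply Filter.Eventually.of_forall
    intro x
    simp only [hvalf, sub_self]
    exact sub_nonneg.mpr (le_max_left _ _)
  have hmg : IsLocalMin (fun x => max (f x) (g x) - g x) p := by
    apply Filter.Eventually.of_forall
    intro x
    simp only [hvalg, sub_self]
    exact sub_nonneg.mpr (le_max_right _ _)
  have e1 : deriv (fun x => max (f x) (g x) - f x) p
      = deriv (fun x => max (f x) (g x)) p - d1 := by
    rw [deriv_fun_sub hD hf.differentiableAt, hf.deriv]
  have e2 : deriv (fun x => max (f x) (g x) - g x) p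
      = deriv (fun x => max (f x) (g x)) p - d2 := by
    rw [deriv_fun_sub hD hg.differentiableAt, hg.deriv]
  have z1 := hmf.deriv_eq_zero
  have z2 := hmg.deriv_eq_zero
  rw [e1] at z1
  rw [e2] at z2
  exact hd (by linarith)

private lemma minNotDiffAt {f g : ℝ → ℝ} {p d1 d2 : ℝ} (hf : HasDerivAt f d1 p)
    (hg : HasDerivAt g d2 p) (hfg : f p = g p) (hd : d1 ≠ d2) :
    ¬ DifferentiableAt ℝ (fun x => min (f x) (g x)) p := by
  intro hD
  have hvalf : min (f p) (g p) = f p := by rw [hfg, min_self]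
  have hvalg : min (f p) (g p) = g p := by rw [hfg, min_self]
  have hmf : IsLocalMin (fun x => f x - min (f x) (g x)) p := by
    apply Filter.Eventually.of_forall
    intro x
    simp only [hvalf, sub_self]
    exact sub_nonneg.mpr (min_le_left _ _)
  have hmg : IsLocalMin (fun x => g x - min (f x) (g x)) p := by
    apply Filter.Eventually.of_forall
    intro x
    simp only [hvalg, sub_self]
    exact sub_nonneg.mpr (min_le_right _ _)
  have e1 : deriv (fun x => f x - min (f x) (g x)) p
      = d1 - deriv (fun x => min (f x) (g x)) p := by
    rw [deriv_fun_sub hf.differentiableAt hD, hf.deriv]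
  have e2 : deriv (fun x => g x - min (f x) (g x)) p
      = d2 - deriv (fun x => min (f x) (g x)) p := by
    rw [deriv_fun_sub hg.differentiableAt hD, hg.deriv]
  have z1 := hmf.deriv_eq_zero
  have z2 := hmg.deriv_eq_zero
  rw [e1] at z1
  rw [e2] at z2
  exact hd (by linarith)

private lemma sortTriple (a : Fin 3 → ℝ) :
    ∃ x1 x2 x3 : ℝ, x1 ≤ x2 ∧ x2 ≤ x3 ∧
      Multiset.map a Finset.univ.val = ↑[x1, x2, x3] := by
  set s := Multiset.map a Finset.univ.val with hs
  have hlen : (Multiset.sort s (· ≤ ·)).length = 3 := by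
    rw [Multiset.length_sort]
    simp [hs]
  have heq := Multiset.sort_eq s (· ≤ ·)
  have hsort := Multiset.pairwise_sort s (· ≤ ·)
  rcases hl : Multiset.sort s (· ≤ ·) with _ | ⟨x1, _ | ⟨x2, _ | ⟨x3, _ | _⟩⟩⟩ <;>
    rw [hl] at hlen <;> simp at hlen
  rw [hl] at heq hsort
  simp [List.pairwise_cons] at hsort
  obtain ⟨⟨h12, -⟩, h23⟩ := hsort
  exact ⟨x1, x2, x3, h12, h23, heq.symm⟩

private lemma tripleSum (a : Fin 3 → ℝ) (x1 x2 x3 : ℝ)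
    (hmap : Multiset.map a Finset.univ.val = ↑[x1, x2, x3]) (f : ℝ → ℝ) :
    ∑ i, f (a i) = f x1 + f x2 + f x3 := by
  have h1 : ∑ i, f (a i) = ((Multiset.map a Finset.univ.val).map f).sum := by
    rw [Multiset.map_map]
    rfl
  rw [h1, hmap]
  simp [add_assoc]

end TrinomialAux

/-- Corollary 9 of the paper: for two distinct trinomial weight systems, neither the max nor
the min of `θ_1(q) = log_3(a_1^q+a_2^q+a_3^q)` and `θ_2(q) = log_3(b_1^q+b_2^q+b_3^q)` is
real-analytic on `ℝ`; in fact the graphs cross transversally at `q = 0` or at `q = 1`. -/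
theorem trinomial_not_analytic (a b : Fin 3 → ℝ)
    (ha : ∀ i, a i ∈ Set.Ioo (0 : ℝ) 1) (hb : ∀ i, b i ∈ Set.Ioo (0 : ℝ) 1)
    (hsa : ∑ i, a i = 1) (hsb : ∑ i, b i = 1)
    (hne : Multiset.map a Finset.univ.val ≠ Multiset.map b Finset.univ.val) :
    (¬ AnalyticOnNhd ℝ
        (fun q : ℝ => max (Real.logb 3 (∑ i, a i ^ q)) (Real.logb 3 (∑ i, b i ^ q)))
        Set.univ) ∧
    (¬ AnalyticOnNhd ℝ
        (fun q : ℝ => min (Real.logb 3 (∑ i, a i ^ q)) (Real.logb 3 (∑ i, b i ^ q)))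
        Set.univ) ∧
    (deriv (fun q : ℝ => Real.logb 3 (∑ i, a i ^ q)) 0
        ≠ deriv (fun q : ℝ => Real.logb 3 (∑ i, b i ^ q)) 0 ∨
      deriv (fun q : ℝ => Real.logb 3 (∑ i, a i ^ q)) 1
        ≠ deriv (fun q : ℝ => Real.logb 3 (∑ i, b i ^ q)) 1) := by
  have hapos : ∀ i, 0 < a i := fun i => (ha i).1
  have hbpos : ∀ i, 0 < b i := fun i => (hb i).1
  have hlog3 : Real.log 3 ≠ 0 := ne_of_gt (Real.log_pos (by norm_num))
  -- value computations
  have ea0 : ∑ i, a i ^ (0:ℝ) = 3 := by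
    simp [Real.rpow_zero]
  have eb0 : ∑ i, b i ^ (0:ℝ) = 3 := by
    simp [Real.rpow_zero]
  have ea0' : ∑ i, a i ^ (0:ℝ) * Real.log (a i) = ∑ i, Real.log (a i) := by
    simp [Real.rpow_zero]
  have eb0' : ∑ i, b i ^ (0:ℝ) * Real.log (b i) = ∑ i, Real.log (b i) := by
    simp [Real.rpow_zero]
  have ea1 : ∑ i, a i ^ (1:ℝ) = 1 := by simpa [Real.rpow_one] using hsa
  have eb1 : ∑ i, b i ^ (1:ℝ) = 1 := by simpa [Real.rpow_one] using hsb
  have ea1' : ∑ i, a i ^ (1:ℝ) * Real.log (a i) = ∑ i, a i * Real.log (a i) := by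
    simp [Real.rpow_one]
  have eb1' : ∑ i, b i ^ (1:ℝ) * Real.log (b i) = ∑ i, b i * Real.log (b i) := by
    simp [Real.rpow_one]
  have da0 := (thetaHasDeriv a hapos 0).deriv
  have db0 := (thetaHasDeriv b hbpos 0).deriv
  have da1 := (thetaHasDeriv a hapos 1).deriv
  have db1 := (thetaHasDeriv b hbpos 1).deriv
  rw [ea0, ea0'] at da0
  rw [eb0, eb0'] at db0
  rw [ea1, ea1'] at da1
  rw [eb1, eb1'] at db1
  -- the key transversality statement
  have key : (deriv (fun q : ℝ => Real.logb 3 (∑ i, a i ^ q)) 0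
        ≠ deriv (fun q : ℝ => Real.logb 3 (∑ i, b i ^ q)) 0 ∨
      deriv (fun q : ℝ => Real.logb 3 (∑ i, a i ^ q)) 1
        ≠ deriv (fun q : ℝ => Real.logb 3 (∑ i, b i ^ q)) 1) := by
    by_contra hk
    push_neg at hk
    obtain ⟨h0, h1⟩ := hk
    rw [da0, db0] at h0
    rw [da1, db1] at h1
    have hlogeq : ∑ i, Real.log (a i) = ∑ i, Real.log (b i) := by
      field_simp at h0
      linarith
    have hflogeq : ∑ i, a i * Real.log (a i) = ∑ i, b i * Real.log (b i) := by
      field_simp at h1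
      linarith
    obtain ⟨x1, x2, x3, hx12, hx23, hmapa⟩ := sortTriple a
    obtain ⟨y1, y2, y3, hy12, hy23, hmapb⟩ := sortTriple b
    have hx1pos : 0 < x1 := by
      have : x1 ∈ Multiset.map a Finset.univ.val := by rw [hmapa]; simp
      obtain ⟨i, -, hi⟩ := Multiset.mem_map.mp this
      exact hi ▸ hapos i
    have hy1pos : 0 < y1 := by
      have : y1 ∈ Multiset.map b Finset.univ.val := by rw [hmapb]; simp
      obtain ⟨i, -, hi⟩ := Multiset.mem_map.mp this
      exact hi ▸ hbpos i
    have hsx : x1 + x2 + x3 = 1 := by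
      have := tripleSum a x1 x2 x3 hmapa id
      simp only [id] at this
      rw [← this]; exact hsa
    have hsy : y1 + y2 + y3 = 1 := by
      have := tripleSum b y1 y2 y3 hmapb id
      simp only [id] at this
      rw [← this]; exact hsb
    have hlx := tripleSum a x1 x2 x3 hmapa Real.log
    have hly := tripleSum b y1 y2 y3 hmapb Real.log
    have hfx := tripleSum a x1 x2 x3 hmapa (fun t => t * Real.log t)
    have hfy := tripleSum b y1 y2 y3 hmapb (fun t => t * Real.log t)
    obtain ⟨e1, e2, e3⟩ := tripleUnique x1 x2 x3 y1 y2 y3 hx1pos hx12 hx23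
      hy1pos hy12 hy23 hsx hsy
      (by rw [← hlx, ← hly]; exact hlogeq)
      (by rw [← hfx, ← hfy]; exact hflogeq)
    apply hne
    rw [hmapa, hmapb, e1, e2, e3]
  refine ⟨?_, ?_, key⟩
  · intro hA
    have hDiff : ∀ p : ℝ, DifferentiableAt ℝ
        (fun q : ℝ => max (Real.logb 3 (∑ i, a i ^ q)) (Real.logb 3 (∑ i, b i ^ q))) p :=
      fun p => (hA p (Set.mem_univ p)).differentiableAt
    rcases key with hk | hk
    · exact maxNotDiffAt (thetaHasDeriv a hapos 0) (thetaHasDeriv b hbpos 0)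
        (by simp only [ea0, eb0])
        (by intro h; apply hk
            rw [(thetaHasDeriv a hapos 0).deriv, (thetaHasDeriv b hbpos 0).deriv]
            exact h)
        (hDiff 0)
    · exact maxNotDiffAt (thetaHasDeriv a hapos 1) (thetaHasDeriv b hbpos 1)
        (by simp only [ea1, eb1])
        (by intro h; apply hk
            rw [(thetaHasDeriv a hapos 1).deriv, (thetaHasDeriv b hbpos 1).deriv]
            exact h)
        (hDiff 1)
  · intro hA
    have hDiff : ∀ p : ℝ, DifferentiableAt ℝ
        (fun q : ℝ => min (Real.logb 3 (∑ i, a i ^ q)) (Real.logb 3 (∑ i, b i ^ q))) p :=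
      fun p => (hA p (Set.mem_univ p)).differentiableAt
    rcases key with hk | hk
    · exact minNotDiffAt (thetaHasDeriv a hapos 0) (thetaHasDeriv b hbpos 0)
        (by simp only [ea0, eb0])
        (by intro h; apply hk
            rw [(thetaHasDeriv a hapos 0).deriv, (thetaHasDeriv b hbpos 0).deriv]
            exact h)
        (hDiff 0)
    · exact minNotDiffAt (thetaHasDeriv a hapos 1) (thetaHasDeriv b hbpos 1)
        (by simp only [ea1, eb1])
        (by intro h; apply hk
            rw [(thetaHasDeriv a hapos 1).deriv, (thetaHasDeriv b hbpos 1).deriv]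
            exact h)
        (hDiff 1)
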